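/- Let X be a complex Hilbert space, let M₁, …, M_N (N ≥ 2) be closed subspaces of X, let P_k denote the orthogonal projection of X onto M_k, let M = M₁ ∩ … ∩ M_N with orthogonal projection P_M, and let T = P_N ⋯ P₁. Then for every real number α > 0 there exists a dense linear subspace X_α of X such that for all x ∈ X_α one has n^α · ‖T^n x − P_M x‖ → 0 as n → ∞. -/

import Mathlib

open Filter Topology
open scoped InnerProductSpace

/-- The orthogonal projection onto a subspace, as an endomorphism. -/
noncomputable def projOnto {X : Type*} [NormedAddCommGroup X] [InnerProductSpace ℂ X]
    (K : Submodule ℂ X) [K.HasOrthogonalProjection] : X →L[ℂ] X :=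
  K.subtypeL.comp K.orthogonalProjectionOnto

/-- The product `P_k ⋯ P_1` of the orthogonal projections onto the first `k` of the
subspaces `M 0, …, M (N-1)` (applied in order: first `P_1 = projOnto (M 0)`, etc.);
for `k = N` this is the operator `T = P_N ⋯ P_1` of the method of cyclic alternating
projections. -/
noncomputable def cycleProd {X : Type*} [NormedAddCommGroup X] [InnerProductSpace ℂ X]
    {N : ℕ} (M : Fin N → Submodule ℂ X) [∀ i, CompleteSpace (M i)] (k : ℕ) :
    X →L[ℂ] X :=
  (((List.ofFn fun i => projOnto (M i)).take k).reverse).prod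

namespace AltProjAux

variable {X : Type*} [NormedAddCommGroup X] [InnerProductSpace ℂ X]

lemma projOnto_apply (K : Submodule ℂ X) [K.HasOrthogonalProjection] (x : X) :
    projOnto K x = K.starProjection x := rfl

lemma projOnto_mem (K : Submodule ℂ X) [K.HasOrthogonalProjection] (x : X) :
    projOnto K x ∈ K := (K.orthogonalProjectionOnto x).2

lemma projOnto_eq_self {K : Submodule ℂ X} [K.HasOrthogonalProjection] {x : X} (h : x ∈ K) :
    projOnto K x = x := by
  rw [projOnto_apply, Submodule.starProjection_eq_self_iff.2 h]

lemma inner_projOnto (K : Submodule ℂ X) [K.HasOrthogonalProjection] (x y : X) :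
    ⟪projOnto K x, y⟫_ℂ = ⟪x, projOnto K y⟫_ℂ :=
  Submodule.inner_starProjection_left_eq_right (K := K) x y

lemma projOnto_sq_add (K : Submodule ℂ X) [K.HasOrthogonalProjection] (x : X) :
    ‖projOnto K x‖ ^ 2 + ‖x - projOnto K x‖ ^ 2 = ‖x‖ ^ 2 := by
  have horth : ⟪projOnto K x, x - projOnto K x⟫_ℂ = 0 := by
    have h1 : x - projOnto K x ∈ Kᗮ := Submodule.sub_starProjection_mem_orthogonal (K := K) x
    have h2 : projOnto K x ∈ K := (K.orthogonalProjectionOnto x).2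
    exact (Submodule.mem_orthogonal K _).1 h1 _ h2
  have := norm_add_sq (𝕜 := ℂ) (projOnto K x) (x - projOnto K x)
  rw [horth] at this
  simpa using this.symm

lemma projOnto_norm_le (K : Submodule ℂ X) [K.HasOrthogonalProjection] (x : X) :
    ‖projOnto K x‖ ≤ ‖x‖ := by
  have h := projOnto_sq_add K x
  have h2 : ‖projOnto K x‖ ^ 2 ≤ ‖x‖ ^ 2 := by nlinarith [sq_nonneg ‖x - projOnto K x‖]
  exact (pow_le_pow_iff_left₀ (norm_nonneg _) (norm_nonneg _) two_ne_zero).1 h2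

lemma mem_of_norm_projOnto (K : Submodule ℂ X) [K.HasOrthogonalProjection] {x : X}
    (h : ‖projOnto K x‖ = ‖x‖) : projOnto K x = x := by
  have h2 := projOnto_sq_add K x
  rw [h] at h2
  have h3 : ‖x - projOnto K x‖ = 0 := by nlinarith
  have h4 := norm_eq_zero.1 h3
  rw [sub_eq_zero] at h4
  exact h4.symm

lemma list_prod_norm_le (l : List (X →L[ℂ] X))
    (h : ∀ g ∈ l, ∀ x, ‖g x‖ ≤ ‖x‖) : ∀ x : X, ‖l.prod x‖ ≤ ‖x‖ := by
  induction l with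
  | nil => simp
  | cons a t ih =>
    intro x
    rw [List.prod_cons, ContinuousLinearMap.mul_apply]
    calc ‖a (t.prod x)‖ ≤ ‖t.prod x‖ := h a (by simp) _
      _ ≤ ‖x‖ := ih (fun g hg => h g (by simp [hg])) x

variable {N : ℕ} (M : Fin N → Submodule ℂ X) [∀ i, CompleteSpace (M i)]

lemma cycleProd_zero : cycleProd M 0 = 1 := by
  simp [cycleProd]

lemma cycleProd_succ_of_lt {k : ℕ} (hk : k < N) :
    cycleProd M (k + 1) = projOnto (M ⟨k, hk⟩) * cycleProd M k := by
  unfold cycleProd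
  rw [List.take_succ]
  have hlen : k < (List.ofFn fun i => projOnto (M i)).length := by simpa using hk
  rw [List.getElem?_eq_getElem hlen, List.getElem_ofFn]
  simp

lemma cycleProd_succ_of_le {k : ℕ} (hk : N ≤ k) :
    cycleProd M (k + 1) = cycleProd M k := by
  unfold cycleProd
  rw [List.take_of_length_le (by simp; omega), List.take_of_length_le (by simpa using hk)]

lemma cycleProd_step {k : ℕ} (hk : k < N) (x : X) :
    cycleProd M (k + 1) x = projOnto (M ⟨k, hk⟩) (cycleProd M k x) := by
  rw [cycleProd_succ_of_lt M hk, ContinuousLinearMap.mul_apply]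

lemma cycleProd_norm_le (k : ℕ) (x : X) : ‖cycleProd M k x‖ ≤ ‖x‖ := by
  apply list_prod_norm_le
  intro g hg y
  rw [List.mem_reverse] at hg
  have := List.take_subset k _ hg
  rw [List.mem_ofFn] at this
  obtain ⟨i, rfl⟩ := this
  exact projOnto_norm_le _ y

lemma norm_cycleProd_N_le (k : ℕ) (x : X) :
    ‖cycleProd M N x‖ ≤ ‖cycleProd M k x‖ := by
  set L := List.ofFn fun i => projOnto (M i) with hL
  have h1 : cycleProd M N = (L.drop k).reverse.prod * cycleProd M k := by
    unfold cycleProd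
    rw [List.take_of_length_le (by simp), ← hL]
    conv_lhs => rw [← List.take_append_drop k L]
    rw [List.reverse_append, List.prod_append]
  rw [h1, ContinuousLinearMap.mul_apply]
  apply list_prod_norm_le
  intro g hg y
  rw [List.mem_reverse] at hg
  have := List.drop_subset k _ hg
  rw [hL, List.mem_ofFn] at this
  obtain ⟨i, rfl⟩ := this
  exact projOnto_norm_le _ y

lemma T_pow_norm_le (n : ℕ) (x : X) : ‖((cycleProd M N) ^ n) x‖ ≤ ‖x‖ := by
  induction n with
  | zero => simp
  | succ n ih =>
    rw [pow_succ', ContinuousLinearMap.mul_apply]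
    exact le_trans (cycleProd_norm_le M N _) ih

lemma key1 (x : X) :
    ‖x - cycleProd M N x‖ ^ 2 ≤ N * (‖x‖ ^ 2 - ‖cycleProd M N x‖ ^ 2) := by
  set f : ℕ → X →L[ℂ] X := fun k => cycleProd M k with hf
  have h0 : f 0 = 1 := cycleProd_zero M
  have hstep : ∀ k < N, ∀ x : X,
      ‖f (k + 1) x‖ ^ 2 + ‖f k x - f (k + 1) x‖ ^ 2 = ‖f k x‖ ^ 2 := by
    intro k hk y
    rw [hf]
    simp only [cycleProd_step M hk]
    exact projOnto_sq_add _ _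
  have hsum : x - cycleProd M N x = ∑ k ∈ Finset.range N, (f k x - f (k + 1) x) := by
    rw [Finset.sum_range_sub' (fun k => f k x), h0]
    simp
    rfl
  have hnorm : ‖x - cycleProd M N x‖ ≤ ∑ k ∈ Finset.range N, ‖f k x - f (k + 1) x‖ := by
    rw [hsum]; exact norm_sum_le _ _
  have hsq : ‖x - cycleProd M N x‖ ^ 2
      ≤ (∑ k ∈ Finset.range N, ‖f k x - f (k + 1) x‖) ^ 2 :=
    pow_le_pow_left₀ (norm_nonneg _) hnorm 2
  have hcs := sq_sum_le_card_mul_sum_sq (s := Finset.range N)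
    (f := fun k => ‖f k x - f (k + 1) x‖)
  rw [Finset.card_range] at hcs
  have htel : ∑ k ∈ Finset.range N, ‖f k x - f (k + 1) x‖ ^ 2
      = ‖x‖ ^ 2 - ‖cycleProd M N x‖ ^ 2 := by
    have h1 : ∀ k ∈ Finset.range N, ‖f k x - f (k + 1) x‖ ^ 2
        = ‖f k x‖ ^ 2 - ‖f (k + 1) x‖ ^ 2 := by
      intro k hk
      have := hstep k (Finset.mem_range.1 hk) x
      linarith
    rw [Finset.sum_congr rfl h1, Finset.sum_range_sub' (fun k => ‖f k x‖ ^ 2), h0]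
    simp
    rfl
  calc ‖x - cycleProd M N x‖ ^ 2
      ≤ (∑ k ∈ Finset.range N, ‖f k x - f (k + 1) x‖) ^ 2 := hsq
    _ ≤ N * ∑ k ∈ Finset.range N, ‖f k x - f (k + 1) x‖ ^ 2 := hcs
    _ = N * (‖x‖ ^ 2 - ‖cycleProd M N x‖ ^ 2) := by rw [htel]

lemma key2 (n : ℕ) (x : X) :
    ((n : ℝ) + 1) * ‖(((cycleProd M N) ^ n) * (1 - cycleProd M N)) x‖ ^ 2
      ≤ N * ‖x‖ ^ 2 := by
  set T := cycleProd M N with hT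
  set a : ℕ → ℝ := fun j => ‖((T ^ j) * (1 - T)) x‖ with ha
  have hanti : Antitone a := by
    apply antitone_nat_of_succ_le
    intro j
    have e1 : ∀ k : ℕ, a k = ‖(T ^ k) ((1 - T) x)‖ := by
      intro k; rw [ha]; simp [ContinuousLinearMap.mul_apply]
    rw [e1, e1, pow_succ', ContinuousLinearMap.mul_apply, hT]
    exact cycleProd_norm_le M N _
  have hbound : ∀ j, a j ^ 2 ≤ N * (‖(T ^ j) x‖ ^ 2 - ‖(T ^ (j + 1)) x‖ ^ 2) := by
    intro j
    have hc : (T ^ j) * (1 - T) = (1 - T) * (T ^ j) :=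
      (((Commute.one_left T).sub_left (Commute.refl T)).pow_right j).eq.symm
    have haj : a j = ‖(T ^ j) x - T ((T ^ j) x)‖ := by
      rw [ha]
      simp only [hc, ContinuousLinearMap.mul_apply, ContinuousLinearMap.sub_apply,
        ContinuousLinearMap.one_apply]
    have h2 : T ((T ^ j) x) = (T ^ (j + 1)) x := by
      rw [pow_succ', ContinuousLinearMap.mul_apply]
    rw [haj, ← h2]
    have h3 := key1 M ((T ^ j) x)
    rw [← hT] at h3
    exact h3
  have hsum : ∑ j ∈ Finset.range (n + 1), a j ^ 2 ≤ N * ‖x‖ ^ 2 := by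
    calc ∑ j ∈ Finset.range (n + 1), a j ^ 2
        ≤ ∑ j ∈ Finset.range (n + 1), (N : ℝ) * (‖(T ^ j) x‖ ^ 2 - ‖(T ^ (j + 1)) x‖ ^ 2) :=
          Finset.sum_le_sum fun j _ => hbound j
      _ = N * (‖(T ^ 0) x‖ ^ 2 - ‖(T ^ (n + 1)) x‖ ^ 2) := by
          rw [← Finset.mul_sum, Finset.sum_range_sub' (fun j => ‖(T ^ j) x‖ ^ 2)]
      _ ≤ N * ‖x‖ ^ 2 := by
          have h1 : (0:ℝ) ≤ ‖(T ^ (n+1)) x‖ ^ 2 := sq_nonneg _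
          have h2 : (0:ℝ) ≤ (N:ℝ) := Nat.cast_nonneg N
          rw [pow_zero, ContinuousLinearMap.one_apply]
          nlinarith [mul_nonneg h2 h1]
  have hconst : ((n : ℝ) + 1) * a n ^ 2 ≤ ∑ j ∈ Finset.range (n + 1), a j ^ 2 := by
    have h1 : ∀ j ∈ Finset.range (n + 1), a n ^ 2 ≤ a j ^ 2 := by
      intro j hj
      have hj' : j ≤ n := Nat.lt_succ_iff.1 (Finset.mem_range.1 hj)
      have := hanti hj'
      exact pow_le_pow_left₀ (norm_nonneg _) this 2
    calc ((n : ℝ) + 1) * a n ^ 2 = ∑ _j ∈ Finset.range (n + 1), a n ^ 2 := by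
          rw [Finset.sum_const, Finset.card_range, nsmul_eq_mul]
          push_cast; ring
      _ ≤ ∑ j ∈ Finset.range (n + 1), a j ^ 2 := Finset.sum_le_sum h1
  exact le_trans hconst hsum

lemma T_opNorm_le : ‖cycleProd M N‖ ≤ 1 :=
  ContinuousLinearMap.opNorm_le_bound _ zero_le_one
    (fun x => by simpa using cycleProd_norm_le M N x)

lemma key3 (n : ℕ) :
    ‖((cycleProd M N) ^ n) * (1 - cycleProd M N)‖ ≤ Real.sqrt (N / (n + 1)) := by
  apply ContinuousLinearMap.opNorm_le_bound _ (Real.sqrt_nonneg _)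
  intro x
  have h1 := key2 M n x
  have hpos : (0:ℝ) < (n : ℝ) + 1 := by positivity
  have hdiv : (0:ℝ) ≤ (N : ℝ) / ((n:ℝ) + 1) := by positivity
  have h2 : ‖(((cycleProd M N) ^ n) * (1 - cycleProd M N)) x‖ ^ 2
      ≤ (Real.sqrt ((N:ℝ) / ((n:ℝ) + 1)) * ‖x‖) ^ 2 := by
    rw [mul_pow, Real.sq_sqrt hdiv]
    rw [div_mul_eq_mul_div, le_div_iff₀ hpos]
    calc ‖(((cycleProd M N) ^ n) * (1 - cycleProd M N)) x‖ ^ 2 * ((n:ℝ) + 1)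
        = ((n : ℝ) + 1) * ‖(((cycleProd M N) ^ n) * (1 - cycleProd M N)) x‖ ^ 2 := by ring
      _ ≤ N * ‖x‖ ^ 2 := h1
      _ = (N:ℝ) * ‖x‖ ^ 2 := rfl
  exact (pow_le_pow_iff_left₀ (norm_nonneg _) (by positivity) two_ne_zero).1 h2

lemma key4 {m : ℕ} (hm : 1 ≤ m) (n : ℕ) :
    ‖((cycleProd M N) ^ n) * (1 - cycleProd M N) ^ m‖
      ≤ Real.sqrt ((N : ℝ) / (↑(n / m) + 1)) ^ m := by
  set T := cycleProd M N with hT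
  set q := n / m with hq
  have hcomm : Commute (T ^ q) (1 - T) :=
    (Commute.one_right (T ^ q)).sub_right ((Commute.refl T).pow_left q)
  have hdecomp : (T ^ n) * (1 - T) ^ m = (T ^ (n - m * q)) * ((T ^ q) * (1 - T)) ^ m := by
    rw [hcomm.mul_pow, ← pow_mul, ← mul_assoc, ← pow_add]
    congr 2
    have h1 : m * q ≤ n := by rw [hq, mul_comm]; exact Nat.div_mul_le_self n m
    rw [mul_comm q m]
    omega
  rw [hdecomp]
  calc ‖(T ^ (n - m * q)) * ((T ^ q) * (1 - T)) ^ m‖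
      ≤ ‖T ^ (n - m * q)‖ * ‖((T ^ q) * (1 - T)) ^ m‖ := norm_mul_le _ _
    _ ≤ 1 * ‖((T ^ q) * (1 - T)) ^ m‖ := by
        apply mul_le_mul_of_nonneg_right _ (norm_nonneg _)
        exact ContinuousLinearMap.opNorm_le_bound _ zero_le_one
          (fun x => by simpa using T_pow_norm_le M _ x)
    _ = ‖((T ^ q) * (1 - T)) ^ m‖ := one_mul _
    _ ≤ ‖(T ^ q) * (1 - T)‖ ^ m := norm_pow_le' _ hm
    _ ≤ Real.sqrt ((N : ℝ) / (↑q + 1)) ^ m :=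
        pow_le_pow_left₀ (norm_nonneg _) (key3 M q) m

lemma key5 {m : ℕ} (hm : 1 ≤ m) {n : ℕ} (hn : 1 ≤ n) :
    ‖((cycleProd M N) ^ n) * (1 - cycleProd M N) ^ m‖
      ≤ Real.sqrt ((N : ℝ) * m / n) ^ m := by
  refine le_trans (key4 M hm n) ?_
  apply pow_le_pow_left₀ (Real.sqrt_nonneg _)
  apply Real.sqrt_le_sqrt
  set q := n / m with hq
  have h1 : n < m * (q + 1) := by
    rw [hq, Nat.mul_add, mul_one]
    have := Nat.div_add_mod n m
    have := Nat.mod_lt n (show 0 < m by omega)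
    omega
  have h1' : (n : ℝ) ≤ (m : ℝ) * ((q : ℝ) + 1) := by
    have : (n : ℝ) < (m : ℝ) * ((q : ℝ) + 1) := by exact_mod_cast h1
    linarith
  have hNpos : (0:ℝ) ≤ (N : ℝ) := Nat.cast_nonneg N
  have hq1 : (0:ℝ) < (q : ℝ) + 1 := by positivity
  have hnpos : (0:ℝ) < (n : ℝ) := by exact_mod_cast hn
  rw [div_le_div_iff₀ hq1 hnpos]
  nlinarith

lemma T_fix_of_mem {v : X} (hv : v ∈ ⨅ i, M i) (k : ℕ) : cycleProd M k v = v := by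
  induction k with
  | zero => rw [cycleProd_zero]; rfl
  | succ k ih =>
    rcases lt_or_ge k N with h | h
    · rw [cycleProd_step M h, ih, projOnto_eq_self ((Submodule.mem_iInf _).1 hv _)]
    · rw [cycleProd_succ_of_le M h, ih]

lemma mem_iInf_of_T_fix {v : X} (hv : cycleProd M N v = v) : v ∈ ⨅ i, M i := by
  have hn : ∀ k, ‖cycleProd M k v‖ = ‖v‖ := by
    intro k
    have h1 : ‖cycleProd M N v‖ ≤ ‖cycleProd M k v‖ := norm_cycleProd_N_le M k v
    have h2 : ‖cycleProd M k v‖ ≤ ‖v‖ := cycleProd_norm_le M k v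
    rw [hv] at h1
    linarith
  have hfix : ∀ k, cycleProd M k v = v := by
    intro k
    induction k with
    | zero => rw [cycleProd_zero]; rfl
    | succ k ih =>
      rcases lt_or_ge k N with h | h
      · rw [cycleProd_step M h, ih]
        apply mem_of_norm_projOnto
        have h3 := hn (k + 1)
        rw [cycleProd_step M h, ih] at h3
        exact h3
      · rw [cycleProd_succ_of_le M h, ih]
  rw [Submodule.mem_iInf]
  intro i
  have h1 := hfix (i : ℕ)
  have h2 := hfix ((i : ℕ) + 1)
  rw [cycleProd_step M i.isLt, h1] at h2
  have h3 : projOnto (M ⟨(i : ℕ), i.isLt⟩) v ∈ M ⟨(i : ℕ), i.isLt⟩ := projOnto_mem _ _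
  rw [h2] at h3
  simpa [Fin.eta] using h3

variable [CompleteSpace X]

omit [CompleteSpace X] in
lemma pow_apply_norm_le {C : X →L[ℂ] X} (hC : ∀ x, ‖C x‖ ≤ ‖x‖) (n : ℕ) (x : X) :
    ‖(C ^ n) x‖ ≤ ‖x‖ := by
  induction n with
  | zero => simp
  | succ n ih =>
    rw [pow_succ', ContinuousLinearMap.mul_apply]
    exact le_trans (hC _) ih

lemma star_contr {C : X →L[ℂ] X} (hC : ∀ x, ‖C x‖ ≤ ‖x‖) (x : X) : ‖star C x‖ ≤ ‖x‖ := by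
  have h1 : ‖star C‖ = ‖C‖ := norm_star C
  have h2 : ‖C‖ ≤ 1 := ContinuousLinearMap.opNorm_le_bound _ zero_le_one
    (fun x => by simpa using hC x)
  calc ‖star C x‖ ≤ ‖star C‖ * ‖x‖ := ContinuousLinearMap.le_opNorm _ _
    _ ≤ 1 * ‖x‖ := by rw [h1]; exact mul_le_mul_of_nonneg_right h2 (norm_nonneg x)
    _ = ‖x‖ := one_mul _

lemma star_fix {C : X →L[ℂ] X} (hC : ∀ x, ‖C x‖ ≤ ‖x‖) {v : X} (h : C v = v) :
    star C v = v := by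
  have hnorm : ‖star C v‖ ≤ ‖v‖ := star_contr hC v
  have hinner : ⟪star C v, v⟫_ℂ = ⟪v, v⟫_ℂ := by
    rw [ContinuousLinearMap.star_eq_adjoint, ContinuousLinearMap.adjoint_inner_left, h]
  have hsq := norm_sub_sq (𝕜 := ℂ) (star C v) v
  rw [hinner] at hsq
  have hre : RCLike.re ⟪v, v⟫_ℂ = ‖v‖ ^ 2 := by
    rw [← inner_self_eq_norm_sq (𝕜 := ℂ)]
  have hz : ‖star C v - v‖ ^ 2 ≤ 0 := by
    rw [hsq, hre]
    have h9 := mul_self_le_mul_self (norm_nonneg (star C v)) hnorm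
    nlinarith
  have h0 : ‖star C v - v‖ = 0 := by nlinarith [norm_nonneg (star C v - v)]
  rw [← sub_eq_zero]
  exact norm_eq_zero.1 h0

omit [CompleteSpace X] in
lemma collapse {C : X →L[ℂ] X} (hC : ∀ x, ‖C x‖ ≤ ‖x‖) :
    ∀ m : ℕ, ∀ v : X, ((1 - C) ^ m) v = 0 → v - C v = 0 := by
  intro m
  induction m with
  | zero =>
    intro v hv
    simp only [pow_zero, ContinuousLinearMap.one_apply] at hv
    rw [hv]; simp
  | succ m ih =>
    intro v hv
    have h1 : ((1 - C) ^ m) ((1 - C) v) = 0 := by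
      rw [← ContinuousLinearMap.mul_apply, ← pow_succ]
      exact hv
    have h2 := ih _ h1
    set u := v - C v with hu
    have huC : C u = u := by
      have h3 : (1 - C) v = u := by
        rw [hu]; simp [ContinuousLinearMap.sub_apply, ContinuousLinearMap.one_apply]
      rw [h3] at h2
      rw [← sub_eq_zero]
      rw [sub_eq_zero] at h2 ⊢
      exact h2.symm
    have hiter : ∀ n : ℕ, (C ^ n) v = v - (n : ℂ) • u := by
      intro n
      induction n with
      | zero => simp
      | succ n ihn =>
        rw [pow_succ', ContinuousLinearMap.mul_apply, ihn, map_sub, map_smul, huC]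
        have hCv : C v = v - u := by rw [hu]; abel
        rw [hCv]
        push_cast
        module
    have hbnd : ∀ n : ℕ, (n : ℝ) * ‖u‖ ≤ 2 * ‖v‖ := by
      intro n
      have h4 := pow_apply_norm_le hC n v
      rw [hiter n] at h4
      have h5 : ‖(n : ℂ) • u‖ - ‖v‖ ≤ ‖v - (n : ℂ) • u‖ := by
        have := norm_sub_norm_le ((n : ℂ) • u) v
        rw [norm_sub_rev] at this
        linarith
      rw [norm_smul] at h5
      have h6 : ‖(n : ℂ)‖ = (n : ℝ) := by
        simp
      rw [h6] at h5
      linarith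
    by_contra hne
    have hupos : 0 < ‖u‖ := by
      rw [norm_pos_iff]
      exact hne
    obtain ⟨n, hn⟩ := exists_nat_gt (2 * ‖v‖ / ‖u‖)
    have h7 := hbnd n
    rw [div_lt_iff₀ hupos] at hn
    linarith

end AltProjAux

open AltProjAux in
/-- **Polynomial rates of convergence on dense subspaces for alternating projections.**
For every `α > 0` there is a dense subspace `X_α` of `X` such that
`n^α ‖Tⁿx - P_M x‖ → 0` for every `x ∈ X_α`, where `T = P_N ⋯ P_1`. -/
theorem alternatingProjections_polynomial_rates_on_dense_subspace
    {X : Type*} [NormedAddCommGroup X] [InnerProductSpace ℂ X] [CompleteSpace X]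
    {N : ℕ} (hN : 2 ≤ N) (M : Fin N → Submodule ℂ X) [∀ i, CompleteSpace (M i)]
    [CompleteSpace (⨅ i, M i : Submodule ℂ X)] :
    ∀ α : ℝ, 0 < α → ∃ Xα : Submodule ℂ X, Dense (Xα : Set X) ∧
      ∀ x ∈ Xα,
        Tendsto
          (fun n : ℕ =>
            (n : ℝ) ^ α * ‖((cycleProd M N) ^ n) x - (projOnto (⨅ i, M i)) x‖)
          atTop (𝓝 0) := by
  intro α hα
  classical
  set T := cycleProd M N with hT
  have hTc : ∀ x : X, ‖T x‖ ≤ ‖x‖ := cycleProd_norm_le M N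
  set m : ℕ := ⌈2 * α⌉₊ + 1 with hm
  have hm1 : 1 ≤ m := by omega
  have hm2 : 2 * α < (m : ℝ) := by
    have h1 := Nat.le_ceil (2 * α)
    have h2 : ((⌈2 * α⌉₊ : ℝ)) < (m : ℝ) := by rw [hm]; push_cast; linarith
    linarith
  set B : X →L[ℂ] X := (1 - T) ^ m with hB
  refine ⟨(⨅ i, M i) ⊔ LinearMap.range (B : X →ₗ[ℂ] X), ?_, ?_⟩
  · rw [Submodule.dense_iff_topologicalClosure_eq_top,
      Submodule.topologicalClosure_eq_top_iff, Submodule.eq_bot_iff]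
    intro v hv
    rw [Submodule.mem_orthogonal] at hv
    have hR : ((star (1 - T)) ^ m) v = 0 := by
      have h0 : ∀ z : X, ⟪B z, v⟫_ℂ = 0 := fun z =>
        hv _ (Submodule.mem_sup_right (LinearMap.mem_range.2 ⟨z, rfl⟩))
      have h1 : ∀ z : X, ⟪z, ((star (1 - T)) ^ m) v⟫_ℂ = 0 := by
        intro z
        rw [← star_pow, ContinuousLinearMap.star_eq_adjoint,
          ContinuousLinearMap.adjoint_inner_right]
        exact h0 z
      exact inner_self_eq_zero.1 (h1 _)
    have hsT : star (1 - T) = 1 - star T := by rw [star_sub, star_one]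
    rw [hsT] at hR
    have h2 := collapse (star_contr hTc) m v hR
    have h3 : star T v = v := by rw [sub_eq_zero] at h2; exact h2.symm
    have h4 : T v = v := by
      have h5 := star_fix (star_contr hTc) h3
      rwa [star_star] at h5
    have h6 : v ∈ ⨅ i, M i := mem_iInf_of_T_fix M h4
    exact inner_self_eq_zero.1 (hv v (Submodule.mem_sup_left h6))
  · intro x hx
    rw [Submodule.mem_sup] at hx
    obtain ⟨u, hu, w, hw, rfl⟩ := hx
    obtain ⟨z, rfl⟩ := LinearMap.mem_range.1 hw
    have hQ : projOnto (⨅ i, M i) (u + B z) = u := by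
      rw [projOnto_apply]
      apply Submodule.eq_starProjection_of_mem_of_inner_eq_zero hu
      intro w' hw'
      have hfixw : T w' = w' := T_fix_of_mem M hw' N
      have hsfix : star T w' = w' := star_fix hTc hfixw
      have hA1 : (star (1 - T)) w' = 0 := by
        rw [star_sub, star_one]
        simp [ContinuousLinearMap.sub_apply, ContinuousLinearMap.one_apply, hsfix]
      have hzero : ((star (1 - T)) ^ m) w' = 0 := by
        obtain ⟨m', hm'⟩ : ∃ m', m = m' + 1 := ⟨m - 1, by omega⟩
        rw [hm', pow_succ, ContinuousLinearMap.mul_apply, hA1, map_zero]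
      rw [add_sub_cancel_left]
      calc ⟪B z, w'⟫_ℂ = ⟪z, ((star (1 - T)) ^ m) w'⟫_ℂ := by
            rw [hB, ← star_pow, ContinuousLinearMap.star_eq_adjoint]
            exact (ContinuousLinearMap.adjoint_inner_right _ _ _).symm
        _ = 0 := by rw [hzero, inner_zero_right]
    have hTu : T u = u := T_fix_of_mem M hu N
    have hun : ∀ n : ℕ, (T ^ n) u = u := by
      intro n
      induction n with
      | zero => simp
      | succ n ih => rw [pow_succ', ContinuousLinearMap.mul_apply, ih, hTu]
    have hfun : ∀ n : ℕ, ((cycleProd M N) ^ n) (u + B z) - projOnto (⨅ i, M i) (u + B z)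
        = ((T ^ n) * B) z := by
      intro n
      rw [hQ, ← hT, map_add, hun n, ContinuousLinearMap.mul_apply]
      abel
    have hfeq : (fun n : ℕ => (n : ℝ) ^ α *
          ‖((cycleProd M N) ^ n) (u + B z) - projOnto (⨅ i, M i) (u + B z)‖)
        = fun n : ℕ => (n : ℝ) ^ α * ‖((T ^ n) * B) z‖ := by
      funext n
      rw [hfun n]
    change Tendsto (fun n : ℕ => (n : ℝ) ^ α *
      ‖((cycleProd M N) ^ n) (u + B z) - projOnto (⨅ i, M i) (u + B z)‖) atTop (𝓝 0)
    rw [hfeq]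
    have key : ∀ n : ℕ, 1 ≤ n → ‖((T ^ n) * B) z‖ ≤ Real.sqrt ((N : ℝ) * m / n) ^ m * ‖z‖ := by
      intro n hn
      calc ‖((T ^ n) * B) z‖ ≤ ‖(T ^ n) * B‖ * ‖z‖ := ContinuousLinearMap.le_opNorm _ _
        _ ≤ Real.sqrt ((N : ℝ) * m / n) ^ m * ‖z‖ :=
            mul_le_mul_of_nonneg_right (key5 M hm1 hn) (norm_nonneg z)
    set g : ℕ → ℝ := fun n => Real.sqrt ((N : ℝ) * m) ^ m * ‖z‖ * (n : ℝ) ^ (α - (m : ℝ) / 2)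
      with hg
    have hglim : Tendsto g atTop (𝓝 0) := by
      have hneg : 0 < (m : ℝ) / 2 - α := by linarith
      have h1 : Tendsto (fun n : ℕ => (n : ℝ) ^ (α - (m : ℝ) / 2)) atTop (𝓝 0) := by
        have h2 := (tendsto_rpow_neg_atTop hneg).comp
          (tendsto_natCast_atTop_atTop (R := ℝ))
        convert h2 using 2 with n
        simp only [Function.comp_apply]
        congr 1
        ring
      have h3 := h1.const_mul (Real.sqrt ((N : ℝ) * m) ^ m * ‖z‖)
      simpa [hg] using h3
    apply squeeze_zero'
      (Eventually.of_forall fun n =>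
        mul_nonneg (Real.rpow_nonneg (Nat.cast_nonneg n) α) (norm_nonneg _)) ?_ hglim
    rw [eventually_atTop]
    refine ⟨1, fun n hn => ?_⟩
    have hnpos : (0 : ℝ) < (n : ℝ) := by exact_mod_cast hn
    calc (n : ℝ) ^ α * ‖((T ^ n) * B) z‖
        ≤ (n : ℝ) ^ α * (Real.sqrt ((N : ℝ) * m / n) ^ m * ‖z‖) :=
          mul_le_mul_of_nonneg_left (key n hn) (Real.rpow_nonneg (Nat.cast_nonneg n) α)
      _ = g n := by
          rw [hg]
          have hNm : (0 : ℝ) ≤ (N : ℝ) * m := by positivity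
          rw [Real.sqrt_div hNm, div_pow]
          have hsn : Real.sqrt (n : ℝ) ^ m = (n : ℝ) ^ ((m : ℝ) / 2) := by
            rw [Real.sqrt_eq_rpow, ← Real.rpow_natCast ((n : ℝ) ^ ((1 : ℝ) / 2)) m,
              ← Real.rpow_mul hnpos.le]
            congr 1
            ring
          rw [hsn]
          show _ = Real.sqrt ((N : ℝ) * m) ^ m * ‖z‖ * (n : ℝ) ^ (α - (m : ℝ) / 2)
          rw [Real.rpow_sub hnpos]
          ring
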